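/- Every element of Sp(4,ℤ) of finite order has order at most 12. -/

import Mathlib

open Matrix

/-- The standard symplectic form matrix `J = [[0, I₂], [-I₂, 0]]` for `Sp(4, ℤ)`. -/
def J4 : Matrix (Fin 4) (Fin 4) ℤ :=
  !![0, 0, 1, 0; 0, 0, 0, 1; -1, 0, 0, 0; 0, -1, 0, 0]

/-- `A` belongs to `Sp(4, ℤ)`, i.e. `Aᵀ J A = J`. -/
def IsSymplectic4 (A : Matrix (Fin 4) (Fin 4) ℤ) : Prop :=
  Aᵀ * J4 * A = J4

open Polynomial
open scoped Classical

/-- If `φ(n) ≤ 4` and `n ≠ 0`, then `n ∣ 120`. -/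
lemma my_dvd_120 {n : ℕ} (hn : n ≠ 0) (h : n.totient ≤ 4) : n ∣ 120 := by
  rw [Nat.dvd_iff_prime_pow_dvd_dvd]
  intro p k hp hpk
  rcases Nat.eq_zero_or_pos k with rfl | hk
  · simp
  have hp' : p.Prime := hp
  have h2p : 2 ≤ p := hp'.two_le
  have h1 : (p ^ k).totient ∣ n.totient := Nat.totient_dvd_of_dvd hpk
  have h2 : (p ^ k).totient ≤ 4 :=
    le_trans (Nat.le_of_dvd (Nat.totient_pos.2 (Nat.pos_of_ne_zero hn)) h1) h
  rw [Nat.totient_prime_pow hp' hk] at h2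
  have hple : p - 1 ≤ 4 := by
    calc p - 1 ≤ p ^ (k - 1) * (p - 1) :=
          Nat.le_mul_of_pos_left _ (Nat.pow_pos hp'.pos)
    _ ≤ 4 := h2
  have hp5 : p ≤ 5 := by omega
  interval_cases p
  · -- p = 2
    have h2' : 2 ^ (k - 1) ≤ 2 ^ 2 := by omega
    have hk3 : k ≤ 3 := by
      have := (Nat.pow_le_pow_iff_right (by norm_num : 1 < 2)).mp h2'
      omega
    exact dvd_trans (pow_dvd_pow 2 hk3) (by norm_num)
  · -- p = 3
    have hk1 : k ≤ 1 := by
      by_contra hc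
      have : 3 ^ 1 ≤ 3 ^ (k - 1) := Nat.pow_le_pow_right (by norm_num) (by omega)
      omega
    exact dvd_trans (pow_dvd_pow 3 hk1) (by norm_num)
  · exact absurd hp' (by norm_num)
  · -- p = 5
    have hk1 : k ≤ 1 := by
      by_contra hc
      have : 5 ^ 1 ≤ 5 ^ (k - 1) := Nat.pow_le_pow_right (by norm_num) (by omega)
      omega
    exact dvd_trans (pow_dvd_pow 5 hk1) (by norm_num)

/-- If the sum of totients of a finset of positive naturals is at most `4`,
then its lcm is at most `12`. -/
lemma my_lcm_le_twelve (D : Finset ℕ) (h0 : ∀ d ∈ D, 0 < d)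
    (hs : ∑ d ∈ D, Nat.totient d ≤ 4) : D.lcm id ≤ 12 := by
  by_cases hall : ∀ d ∈ D, d ∣ 12
  · exact Nat.le_of_dvd (by norm_num) (Finset.lcm_dvd hall)
  · push_neg at hall
    obtain ⟨d0, hd0D, hd0n⟩ := hall
    have hφ : Nat.totient d0 ≤ 4 :=
      le_trans (Finset.single_le_sum (f := fun d => Nat.totient d)
        (fun i _ => Nat.zero_le _) hd0D) hs
    have hdvd120 : d0 ∣ 120 := my_dvd_120 (h0 d0 hd0D).ne' hφ
    have key : ∀ d ∈ Nat.divisors 120, ¬ d ∣ 12 → Nat.totient d ≤ 4 →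
        d ≤ 12 ∧ 4 ≤ Nat.totient d := by decide
    have hd0mem : d0 ∈ Nat.divisors 120 :=
      Nat.mem_divisors.mpr ⟨hdvd120, by norm_num⟩
    obtain ⟨hd0le, hd0tot⟩ := key d0 hd0mem hd0n hφ
    have heq : ∀ d ∈ D, d = d0 := by
      intro d hd
      by_contra hne
      have hsub : ({d0, d} : Finset ℕ) ⊆ D := by
        intro x hx
        simp only [Finset.mem_insert, Finset.mem_singleton] at hx
        rcases hx with rfl | rfl <;> assumption
      have hpair : ∑ x ∈ ({d0, d} : Finset ℕ), Nat.totient x ≤ 4 :=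
        le_trans (Finset.sum_le_sum_of_subset hsub) hs
      rw [Finset.sum_pair (Ne.symm hne)] at hpair
      have : 0 < Nat.totient d := Nat.totient_pos.2 (h0 d hd)
      omega
    have : D.lcm id ∣ d0 := Finset.lcm_dvd fun d hd => by
      rw [id, heq d hd]
    exact le_trans (Nat.le_of_dvd (h0 d0 hd0D) this) hd0le

/-- A squarefree polynomial dividing a product of irreducibles divides the subproduct of
those irreducibles that divide it. -/
lemma my_dvd_filter (f : ℕ → ℚ[X]) :
    ∀ (s : Finset ℕ) (P : ℚ[X]), Squarefree P → (∀ d ∈ s, Irreducible (f d)) →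
      P ∣ ∏ d ∈ s, f d → P ∣ ∏ d ∈ s.filter (fun d => f d ∣ P), f d := by
  intro s
  induction s using Finset.induction_on with
  | empty => intro P _ _ h; simpa using h
  | insert _ _ ha ih =>
    rename_i a s
    intro P hsq hirr hdvd
    rw [Finset.prod_insert ha] at hdvd
    obtain ⟨u, v, hu, hv, huv⟩ := exists_dvd_and_dvd_of_dvd_mul hdvd
    have hvP : v ∣ P := ⟨u, by rw [huv, mul_comm]⟩
    by_cases hfa : f a ∣ P
    · rw [Finset.filter_insert, if_pos hfa, Finset.prod_insert (by simp [ha])]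
      have hvsq : Squarefree v := hsq.squarefree_of_dvd hvP
      have hv' : v ∣ ∏ d ∈ s.filter (fun d => f d ∣ v), f d :=
        ih v hvsq (fun d hd => hirr d (Finset.mem_insert_of_mem hd)) hv
      have hsub : s.filter (fun d => f d ∣ v) ⊆ s.filter (fun d => f d ∣ P) := by
        intro x hx
        rw [Finset.mem_filter] at hx ⊢
        exact ⟨hx.1, hx.2.trans hvP⟩
      have hv'' : v ∣ ∏ d ∈ s.filter (fun d => f d ∣ P), f d :=
        hv'.trans (Finset.prod_dvd_prod_of_subset _ _ _ hsub)
      calc P = u * v := huv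
      _ ∣ f a * ∏ d ∈ s.filter (fun d => f d ∣ P), f d := mul_dvd_mul hu hv''
    · rw [Finset.filter_insert, if_neg hfa]
      have huu : IsUnit u := by
        by_contra hun
        rcases (hirr a (Finset.mem_insert_self a s)).dvd_iff.mp hu with h1 | h1
        · exact hun h1
        · exact hfa (h1.dvd.trans ⟨v, huv⟩)
      have hPv : P ∣ v := by
        rw [huv]
        exact huu.mul_left_dvd.mpr dvd_rfl
      exact ih P hsq (fun d hd => hirr d (Finset.mem_insert_of_mem hd)) (hPv.trans hv)

set_option maxHeartbeats 2000000 in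
theorem stmt_10 (A : Matrix (Fin 4) (Fin 4) ℤ) (hA : IsSymplectic4 A)
    (hfin : 0 < orderOf A) : orderOf A ≤ 12 := by
  set m := orderOf A with hm
  -- move to ℚ
  set B : Matrix (Fin 4) (Fin 4) ℚ := (Int.castRingHom ℚ).mapMatrix A with hBdef
  have hinj : Function.Injective
      ((Int.castRingHom ℚ).mapMatrix : Matrix (Fin 4) (Fin 4) ℤ →+* Matrix (Fin 4) (Fin 4) ℚ) := by
    intro M N h
    ext i j
    have := congrFun (congrFun h i) j
    simpa [RingHom.mapMatrix_apply, Matrix.map_apply] using this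
  have horder : orderOf B = m :=
    orderOf_injective ((Int.castRingHom ℚ).mapMatrix.toMonoidHom) hinj A
  have hBm : B ^ m = 1 := by
    rw [← horder]; exact pow_orderOf_eq_one B
  have hint : IsIntegral ℚ B := IsIntegral.of_finite ℚ B
  set P : ℚ[X] := minpoly ℚ B with hPdef
  have hPmonic : P.Monic := minpoly.monic hint
  have hPdvd : P ∣ X ^ m - 1 := minpoly.dvd ℚ B (by simp [hBm])
  have hXsq : Squarefree ((X : ℚ[X]) ^ m - 1) := by
    have := (separable_X_pow_sub_C (1 : ℚ)
      (by exact_mod_cast hfin.ne' : (m : ℚ) ≠ 0) one_ne_zero).squarefree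
    simpa using this
  have hPsq : Squarefree P := hXsq.squarefree_of_dvd hPdvd
  have hprod : P ∣ ∏ d ∈ m.divisors, cyclotomic d ℚ := by
    rwa [prod_cyclotomic_eq_X_pow_sub_one hfin ℚ]
  have hirr : ∀ d ∈ m.divisors, Irreducible (cyclotomic d ℚ) := fun d hd =>
    cyclotomic.irreducible_rat (Nat.pos_of_mem_divisors hd)
  set D : Finset ℕ := m.divisors.filter (fun d => cyclotomic d ℚ ∣ P) with hDdef
  have hPD : P ∣ ∏ d ∈ D, cyclotomic d ℚ :=
    my_dvd_filter _ m.divisors P hPsq hirr hprod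
  have hDpos : ∀ d ∈ D, 0 < d := fun d hd =>
    Nat.pos_of_mem_divisors (Finset.mem_filter.mp hd).1
  have hcop : (↑D : Set ℕ).Pairwise (Function.onFun IsCoprime fun d => cyclotomic d ℚ) :=
    fun d _ e _ hde => cyclotomic.isCoprime_rat hde
  -- degree bound
  have hdegP : P.natDegree ≤ 4 := by
    have h1 : P.natDegree ≤ B.charpoly.natDegree :=
      natDegree_le_of_dvd (B.minpoly_dvd_charpoly) (B.charpoly_monic).ne_zero
    rwa [Matrix.charpoly_natDegree_eq_dim, Fintype.card_fin] at h1
  have hsum : ∑ d ∈ D, Nat.totient d ≤ 4 := by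
    have h1 : ∏ d ∈ D, cyclotomic d ℚ ∣ P :=
      Finset.prod_dvd_of_coprime hcop (fun d hd => (Finset.mem_filter.mp hd).2)
    have h2 : (∏ d ∈ D, cyclotomic d ℚ).natDegree ≤ P.natDegree :=
      natDegree_le_of_dvd h1 hPmonic.ne_zero
    rw [natDegree_prod _ _ (fun d _ => cyclotomic_ne_zero d ℚ)] at h2
    simp_rw [natDegree_cyclotomic] at h2
    exact h2.trans hdegP
  -- the order equals the lcm of the orders of the cyclotomic factors
  set L : ℕ := D.lcm id with hLdef
  have hLm : L ∣ m := Finset.lcm_dvd fun d hd =>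
    Nat.dvd_of_mem_divisors (Finset.mem_filter.mp hd).1
  have hmL : m ∣ L := by
    have hdvdL : ∀ d ∈ D, cyclotomic d ℚ ∣ X ^ L - 1 := by
      intro d hd
      have hdL : d ∣ L := Finset.dvd_lcm hd
      obtain ⟨c, hc⟩ := hdL
      have h1 : (X : ℚ[X]) ^ d - 1 ∣ X ^ L - 1 := by
        have := sub_dvd_pow_sub_pow ((X : ℚ[X]) ^ d) 1 c
        rwa [one_pow, ← pow_mul, ← hc] at this
      exact (cyclotomic.dvd_X_pow_sub_one d ℚ).trans h1
    have hPL : P ∣ X ^ L - 1 :=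
      hPD.trans (Finset.prod_dvd_of_coprime hcop hdvdL)
    have hBL : B ^ L = 1 := by
      obtain ⟨c, hc⟩ := hPL
      have := congrArg (Polynomial.aeval B) hc
      rw [_root_.map_mul, minpoly.aeval, zero_mul, _root_.map_sub, map_pow, aeval_X,
        _root_.map_one, sub_eq_zero] at this
      exact this
    rw [← horder]
    exact orderOf_dvd_of_pow_eq_one hBL
  have hmeqL : m = L := Nat.dvd_antisymm hmL hLm
  rw [hmeqL]
  exact my_lcm_le_twelve D hDpos hsum
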